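/- Let F be a field of characteristic ≠ 2, V an infinite-dimensional vector space over F with a nondegenerate quadratic form Q, and φ : V → V an orthogonal linear transformation with Bogolyubov automorphism [φ] of Cl(V,Q). Suppose V' ⊆ V is a φ-invariant nondegenerate finite-dimensional subspace of even dimension such that V'^⊥ ⊆ V(1) = ker(φ − Id) and det(φ|_{V/V(1)}) = 1, where φ|_{V/V(1)} is the map induced by φ on the finite-dimensional quotient V/V(1). Then [φ](z) = z for every z in the centralizer of the subalgebra of Cl(V,Q) generated by ι(V'). -/

import Mathlib

/-- The eigenspace `V(α) = ker (φ - α·Id)` of a linear operator `φ`. -/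
noncomputable def eigSp {F V : Type*} [Field F] [AddCommGroup V] [Module F V]
    (φ : V →ₗ[F] V) (α : F) : Submodule F V :=
  LinearMap.ker (φ - α • LinearMap.id)

/-- The eigenspace `V(α)` is `φ`-invariant, so `φ` induces a linear map on the
quotient `V / V(α)`. -/
noncomputable def quotMap {F V : Type*} [Field F] [AddCommGroup V] [Module F V]
    (φ : V →ₗ[F] V) (α : F) : (V ⧸ eigSp φ α) →ₗ[F] (V ⧸ eigSp φ α) :=
  Submodule.mapQ _ _ φ (by
    intro v hv
    simp only [eigSp, LinearMap.mem_ker, LinearMap.sub_apply, LinearMap.smul_apply,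
      LinearMap.id_coe, id_eq, sub_eq_zero, Submodule.mem_comap] at hv ⊢
    rw [hv, map_smul, hv])

open QuadraticMap Module

section Refl
variable {F : Type*} [Field F] {W : Type*} [AddCommGroup W] [Module F W]

/-- Reflection along an (anisotropic) vector `r`. -/
noncomputable def qrefl (q : QuadraticForm F W) (r : W) : W →ₗ[F] W :=
  LinearMap.id - (q r)⁻¹ • ((QuadraticMap.polarBilin q r).smulRight r)

variable (q : QuadraticForm F W)

theorem qrefl_apply (r v : W) :
    qrefl q r v = v - ((q r)⁻¹ * polar q r v) • r := by
  simp [qrefl, LinearMap.smulRight, mul_smul]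

theorem qrefl_fix {r v : W} (h : polar q r v = 0) : qrefl q r v = v := by
  simp [qrefl_apply, h]

theorem polar_self_eq_two_mul (r : W) : polar q r r = 2 * q r := by
  rw [polar_self, two_nsmul, two_mul]

theorem qrefl_self {r : W} (hr : q r ≠ 0) : qrefl q r r = -r := by
  rw [qrefl_apply, polar_self_eq_two_mul]
  rw [show (q r)⁻¹ * (2 * q r) = 2 by field_simp]
  module

theorem map_qrefl {r : W} (hr : q r ≠ 0) (v : W) : q (qrefl q r v) = q v := by
  have hadd := QuadraticMap.map_add (⇑q) v (-(((q r)⁻¹ * polar q r v) • r))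
  rw [qrefl_apply, sub_eq_add_neg, hadd, ← neg_smul, QuadraticMap.map_smul,
    polar_smul_right, polar_comm (⇑q) v r]
  have h2 : polar q r r = 2 * q r := polar_self_eq_two_mul q r
  field_simp
  linear_combination (polar q r v ^ 2 * (q r)⁻¹) * mul_inv_cancel₀ hr

theorem qrefl_invol {r : W} (hr : q r ≠ 0) (v : W) : qrefl q r (qrefl q r v) = v := by
  rw [qrefl_apply, qrefl_apply, polar_sub_right, polar_smul_right,
    polar_self_eq_two_mul]
  rw [show polar q r v - ((q r)⁻¹ * polar q r v) • (2 * q r) = -polar q r v by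
    field_simp; linear_combination (-2 * polar q r v) * mul_inv_cancel₀ hr]
  field_simp
  module

theorem polar_isometry {σ : W →ₗ[F] W} (hσ : ∀ w, q (σ w) = q w) (a b : W) :
    polar q (σ a) (σ b) = polar q a b := by
  simp only [polar, ← map_add, hσ]

end Refl
theorem q_sub_eq {F : Type*} [Field F] {W : Type*} [AddCommGroup W] [Module F W]
    (q : QuadraticForm F W) (a b : W) : q (a - b) = q a + q b - polar q a b := by
  have h := QuadraticMap.map_add (⇑q) a (-b)
  rw [sub_eq_add_neg, h, QuadraticMap.map_neg, polar_neg_right]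
  ring

theorem isCompl_span_ker {F : Type*} [Field F] {W : Type*} [AddCommGroup W] [Module F W]
    (h2 : (2 : F) ≠ 0) (q : QuadraticForm F W) {r : W} (hr : q r ≠ 0) :
    IsCompl (Submodule.span F {r}) (LinearMap.ker (QuadraticMap.polarBilin q r)) := by
  have h2qr : (2 : F) * q r ≠ 0 := mul_ne_zero h2 hr
  constructor
  · rw [Submodule.disjoint_def]
    intro x hx hxU
    obtain ⟨c, rfl⟩ := Submodule.mem_span_singleton.mp hx
    have hxU' : polar q r (c • r) = 0 := hxU
    rw [polar_smul_right, polar_self_eq_two_mul, smul_eq_mul] at hxU'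
    rcases mul_eq_zero.mp hxU' with hc | hc
    · rw [hc, zero_smul]
    · exact absurd hc h2qr
  · rw [codisjoint_iff, eq_top_iff]
    intro w _
    have hw : w = (polar q r w / (2 * q r)) • r + (w - (polar q r w / (2 * q r)) • r) := by
      abel
    rw [hw]
    refine Submodule.add_mem_sup (Submodule.smul_mem _ _ (Submodule.mem_span_singleton_self r)) ?_
    show polar q r _ = 0
    rw [polar_sub_right, polar_smul_right, polar_self_eq_two_mul, smul_eq_mul]
    field_simp
    ring

section Det
variable {F : Type*} [Field F]

theorem my_det_prodMap {M₁ M₂ : Type*} [AddCommGroup M₁] [Module F M₁]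
    [AddCommGroup M₂] [Module F M₂] [FiniteDimensional F M₁] [FiniteDimensional F M₂]
    (f : M₁ →ₗ[F] M₁) (g : M₂ →ₗ[F] M₂) :
    LinearMap.det (f.prodMap g) = LinearMap.det f * LinearMap.det g := by
  classical
  let b₁ := Module.finBasis F M₁
  let b₂ := Module.finBasis F M₂
  rw [← LinearMap.det_toMatrix (b₁.prod b₂), LinearMap.toMatrix_prodMap,
    Matrix.det_fromBlocks_zero₂₁, LinearMap.det_toMatrix, LinearMap.det_toMatrix]

theorem det_qrefl {W : Type*} [AddCommGroup W] [Module F W] [FiniteDimensional F W]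
    (h2 : (2 : F) ≠ 0) (q : QuadraticForm F W) {r : W} (hr : q r ≠ 0) :
    LinearMap.det (qrefl q r) = -1 := by
  classical
  have hr0 : r ≠ 0 := by rintro rfl; exact hr (map_zero q)
  set U := LinearMap.ker (QuadraticMap.polarBilin q r) with hU
  have hmemU : ∀ w, w ∈ U ↔ polar q r w = 0 := fun w => Iff.rfl
  have h2qr : (2 : F) * q r ≠ 0 := mul_ne_zero h2 hr
  have hcompl : IsCompl (Submodule.span F {r}) U := isCompl_span_ker h2 q hr
  let e := Submodule.prodEquivOfIsCompl _ _ hcompl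
  have hkey : qrefl q r = e.toLinearMap ∘ₗ
      ((-LinearMap.id).prodMap (LinearMap.id)) ∘ₗ e.symm.toLinearMap := by
    have hcomp : (qrefl q r) ∘ₗ e.toLinearMap =
        e.toLinearMap ∘ₗ ((-LinearMap.id).prodMap (LinearMap.id)) := by
      apply LinearMap.ext
      rintro ⟨x, y⟩
      have hx : qrefl q r (x : W) = -(x : W) := by
        obtain ⟨c, hc⟩ := Submodule.mem_span_singleton.mp x.2
        rw [← hc, LinearMap.map_smul, qrefl_self q hr, smul_neg]
      have hy : qrefl q r (y : W) = (y : W) := qrefl_fix q ((hmemU _).mp y.2)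
      have he : ∀ (a : Submodule.span F {r}) (b : U), e (a, b) = (a : W) + (b : W) := by
        intro a b; rfl
      simp only [LinearMap.coe_comp, Function.comp_apply, LinearEquiv.coe_coe,
        LinearMap.coe_prodMap, Prod.map_apply, LinearMap.neg_apply, LinearMap.id_apply, he]
      rw [LinearMap.map_add, hx, hy]
      push_cast
      abel
    have hid : qrefl q r = (qrefl q r ∘ₗ e.toLinearMap) ∘ₗ e.symm.toLinearMap := by
      ext w; simp
    rw [hid, hcomp, LinearMap.comp_assoc]
  rw [hkey]
  rw [LinearMap.det_conj, my_det_prodMap]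
  rw [show (-LinearMap.id : Submodule.span F {r} →ₗ[F] _) = (-1 : F) • LinearMap.id by
    ext; simp]
  rw [LinearMap.det_smul, finrank_span_singleton hr0]
  simp
end Det

section DetBlock
variable {F : Type*} [Field F] {W : Type*} [AddCommGroup W] [Module F W]
  [FiniteDimensional F W]

theorem det_restrict_mul_det_mapQ (f : W →ₗ[F] W) (p : Submodule F W)
    (h : ∀ x ∈ p, f x ∈ p) (h' : p ≤ p.comap f) :
    LinearMap.det f = LinearMap.det (f.restrict h) * LinearMap.det (p.mapQ p f h') := by
  classical
  obtain ⟨c, hc⟩ := Submodule.exists_isCompl p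
  let e := Submodule.prodEquivOfIsCompl p c hc
  let g : (p × c) →ₗ[F] (p × c) := e.symm.toLinearMap ∘ₗ f ∘ₗ e.toLinearMap
  have hf : f = e.toLinearMap ∘ₗ g ∘ₗ e.symm.toLinearMap := by
    apply LinearMap.ext; intro w; simp [g]
  have hdetf : LinearMap.det f = LinearMap.det g := by
    rw [hf]; exact LinearMap.det_conj g e
  let b₁ := Module.finBasis F p
  let b₂ := Module.finBasis F c
  let b := b₁.prod b₂
  let M := LinearMap.toMatrix b b g
  have hgb1 : ∀ j, g (b (Sum.inl j)) = (f.restrict h (b₁ j), 0) := by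
    intro j
    have hb : (b (Sum.inl j)) = (b₁ j, 0) :=
      Prod.ext (Basis.prod_apply_inl_fst _ _ _) (Basis.prod_apply_inl_snd _ _ _)
    have he : e (b₁ j, 0) = (b₁ j : W) := by
      rw [Submodule.coe_prodEquivOfIsCompl']; simp
    have : f ((b₁ j : W)) ∈ p := h _ (b₁ j).2
    simp only [g, LinearMap.coe_comp, Function.comp_apply, LinearEquiv.coe_coe, hb, he]
    rw [show f (b₁ j : W) = ((⟨f (b₁ j : W), this⟩ : p) : W) from rfl,
      Submodule.prodEquivOfIsCompl_symm_apply_left]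
    rfl
  -- the lower-left block of M vanishes
  have h21 : M.toBlocks₂₁ = 0 := by
    ext i j
    simp only [Matrix.toBlocks₂₁, Matrix.of_apply, M, LinearMap.toMatrix_apply, hgb1,
      Basis.prod_repr_inr]
    rw [show b = b₁.prod b₂ from rfl, Basis.prod_repr_inr]
    simp
  have hM : M = Matrix.fromBlocks M.toBlocks₁₁ M.toBlocks₁₂ 0 M.toBlocks₂₂ := by
    conv_lhs => rw [← Matrix.fromBlocks_toBlocks M, h21]
  have hA : M.toBlocks₁₁ = LinearMap.toMatrix b₁ b₁ (f.restrict h) := by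
    ext i j
    simp only [Matrix.toBlocks₁₁, Matrix.of_apply, M, LinearMap.toMatrix_apply, hgb1,
      Basis.prod_repr_inl]
    rw [show b = b₁.prod b₂ from rfl, Basis.prod_repr_inl]
  -- the map induced on `c`
  let Dmap : c →ₗ[F] c := (LinearMap.snd F p c) ∘ₗ e.symm.toLinearMap ∘ₗ f ∘ₗ c.subtype
  have hD : M.toBlocks₂₂ = LinearMap.toMatrix b₂ b₂ Dmap := by
    ext i j
    have hb : (b (Sum.inr j)) = (0, b₂ j) :=
      Prod.ext (Basis.prod_apply_inr_fst _ _ _) (Basis.prod_apply_inr_snd _ _ _)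
    have he : e (0, b₂ j) = (b₂ j : W) := by
      rw [Submodule.coe_prodEquivOfIsCompl']; simp
    simp only [Matrix.toBlocks₂₂, Matrix.of_apply, M, LinearMap.toMatrix_apply,
      Basis.prod_repr_inr, g, LinearMap.coe_comp, Function.comp_apply, LinearEquiv.coe_coe,
      hb, he, Dmap, Submodule.coe_subtype]
    rw [show b = b₁.prod b₂ from rfl, Basis.prod_repr_inr]
    rfl
  have hu : Function.Bijective (p.mkQ ∘ₗ c.subtype) := by
    constructor
    · rw [← LinearMap.ker_eq_bot, LinearMap.ker_comp, Submodule.ker_mkQ,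
        Submodule.eq_bot_iff]
      rintro y hy
      simp only [Submodule.mem_comap, Submodule.coe_subtype] at hy
      have : (y : W) ∈ p ⊓ c := ⟨hy, y.2⟩
      rw [hc.inf_eq_bot] at this
      exact Subtype.ext (by simpa using this)
    · intro z
      obtain ⟨w, rfl⟩ := Submodule.mkQ_surjective p z
      obtain ⟨x, y, hx, hy, hxyw⟩ := (Submodule.codisjoint_iff_exists_add_eq.mp hc.codisjoint) w
      refine ⟨⟨y, hy⟩, ?_⟩
      simp only [LinearMap.coe_comp, Function.comp_apply, Submodule.coe_subtype,
        Submodule.mkQ_apply]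
      rw [← hxyw, Submodule.Quotient.mk_add,
        (Submodule.Quotient.mk_eq_zero p).mpr hx, zero_add]
  let u : c ≃ₗ[F] (W ⧸ p) := LinearEquiv.ofBijective _ hu
  have hinter : ∀ y : c, p.mapQ p f h' (u y) = u (Dmap y) := by
    intro y
    have hdecomp : f (y : W) = ((e.symm (f (y : W))).1 : W) + ((e.symm (f (y : W))).2 : W) := by
      conv_lhs => rw [← e.apply_symm_apply (f (y : W))]
      rw [Submodule.coe_prodEquivOfIsCompl']
    have hthis : p.mkQ (f (y : W)) = p.mkQ ((e.symm (f (y : W))).2 : W) := by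
      conv_lhs => rw [hdecomp, map_add]
      have hz : p.mkQ ((e.symm (f (y : W))).1 : W) = 0 :=
        (Submodule.Quotient.mk_eq_zero p).mpr (e.symm (f (y : W))).1.2
      rw [hz, zero_add]
    simp only [u, LinearEquiv.ofBijective_apply, LinearMap.coe_comp, Function.comp_apply,
      Submodule.coe_subtype, Submodule.mapQ_apply, Dmap, LinearEquiv.coe_coe,
      LinearMap.snd_apply]
    simpa using hthis
  have hmapQ : p.mapQ p f h' = u.toLinearMap ∘ₗ Dmap ∘ₗ u.symm.toLinearMap := by
    apply LinearMap.ext; intro z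
    conv_lhs => rw [← u.apply_symm_apply z]
    simp only [LinearMap.coe_comp, Function.comp_apply, LinearEquiv.coe_coe]
    exact hinter _
  have hdetD : LinearMap.det (p.mapQ p f h') = LinearMap.det Dmap := by
    rw [hmapQ]; exact LinearMap.det_conj Dmap u
  rw [hdetf, ← LinearMap.det_toMatrix b g]
  show M.det = _
  rw [hM, Matrix.det_fromBlocks_zero₂₁, hA, hD,
    LinearMap.det_toMatrix, LinearMap.det_toMatrix, hdetD]
end DetBlock

section CD
variable {F : Type*} [Field F] {W : Type*} [AddCommGroup W] [Module F W]
variable (q : QuadraticForm F W)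

/-- Compatibility of reflections with restriction to a subspace. -/
theorem qrefl_coe (U : Submodule F W) (r u : U) :
    ((qrefl (q.comp U.subtype) r u : U) : W) = qrefl q (r : W) (u : W) := by
  have hq : (q.comp U.subtype) r = q (r : W) := rfl
  have hp : polar (⇑(q.comp U.subtype)) r u = polar (⇑q) (r : W) (u : W) := by
    simp [polar, QuadraticMap.comp_apply]
  rw [qrefl_apply, qrefl_apply, hq, hp]
  push_cast
  ring_nf

theorem prod_qrefl_coe (U : Submodule F W) (l : List U) (u : U) :
    (((l.map fun r : U => qrefl (q.comp U.subtype) r).prod u : U) : W) =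
      ((l.map fun r : U => qrefl q (r : W)).prod) (u : W) := by
  induction l with
  | nil => simp
  | cons a t ih =>
    simp only [List.map_cons, List.prod_cons, Module.End.mul_apply]
    rw [qrefl_coe, ih]

theorem prod_qrefl_fix (l : List W) (v : W) (h : ∀ r ∈ l, polar q r v = 0) :
    (l.map (qrefl q)).prod v = v := by
  induction l with
  | nil => simp
  | cons a t ih =>
    simp only [List.map_cons, List.prod_cons, Module.End.mul_apply]
    rw [ih (fun r hr => h r (List.mem_cons_of_mem _ hr)), qrefl_fix q (h a (List.mem_cons_self))]

theorem map_prod_qrefl (l : List W) (hl : ∀ r ∈ l, q r ≠ 0) (v : W) :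
    q ((l.map (qrefl q)).prod v) = q v := by
  induction l with
  | nil => simp
  | cons a t ih =>
    simp only [List.map_cons, List.prod_cons, Module.End.mul_apply]
    rw [map_qrefl q (hl a (List.mem_cons_self)),
      ih (fun r hr => hl r (List.mem_cons_of_mem _ hr))]

theorem cartan_dieudonne (h2 : (2 : F) ≠ 0) :
    ∀ (n : ℕ) {W : Type*} [AddCommGroup W] [Module F W] [FiniteDimensional F W]
      (q : QuadraticForm F W), (∀ w, (∀ w', polar q w w' = 0) → w = 0) →
    ∀ (σ : W →ₗ[F] W), (∀ w, q (σ w) = q w) → Module.finrank F W = n →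
      ∃ l : List W, (∀ r ∈ l, q r ≠ 0) ∧ σ = (l.map (qrefl q)).prod := by
  intro n
  induction n using Nat.strong_induction_on with
  | _ n IH =>
  intro W _ _ _ q hq σ hσ hrank
  rcases Nat.eq_zero_or_pos n with hn | hn
  · subst hn
    have : Subsingleton W := Module.finrank_zero_iff.mp hrank
    exact ⟨[], by simp, by ext w; exact Subsingleton.elim _ _⟩
  -- key step : an isometry fixing an anisotropic vector is a product of reflections
  have key : ∀ (σ' : W →ₗ[F] W), (∀ w, q (σ' w) = q w) → ∀ v : W, q v ≠ 0 → σ' v = v →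
      ∃ l : List W, (∀ r ∈ l, q r ≠ 0) ∧ σ' = (l.map (qrefl q)).prod := by
    intro σ' hσ' v hv hfix
    set U := LinearMap.ker (QuadraticMap.polarBilin q v) with hU
    have hmemU : ∀ w, w ∈ U ↔ polar q v w = 0 := fun w => Iff.rfl
    have hcompl : IsCompl (Submodule.span F {v}) U := isCompl_span_ker h2 q hv
    have hv0 : v ≠ 0 := by rintro rfl; exact hv (map_zero q)
    have hrankU : Module.finrank F U = n - 1 := by
      have := Submodule.finrank_add_eq_of_isCompl hcompl
      rw [finrank_span_singleton hv0, hrank] at this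
      omega
    -- decomposition of arbitrary vectors
    have hdec : ∀ w : W, ∃ c : F, ∃ u : W, u ∈ U ∧ w = c • v + u := by
      intro w
      refine ⟨polar q v w / (2 * q v), w - (polar q v w / (2 * q v)) • v, ?_, by abel⟩
      rw [hmemU, polar_sub_right, polar_smul_right, polar_self_eq_two_mul, smul_eq_mul]
      field_simp
      ring
    -- the restricted quadratic form is nondegenerate
    have hqU : ∀ u : U, (∀ u' : U, polar (⇑(q.comp U.subtype)) u u' = 0) → u = 0 := by
      intro u hu
      have hpU : ∀ u' : U, polar (⇑q) (u : W) (u' : W) = 0 := by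
        intro u'
        have := hu u'
        simpa [polar, QuadraticMap.comp_apply] using this
      have huv : polar (⇑q) (u : W) v = 0 := by
        rw [polar_comm]; exact (hmemU _).mp u.2
      have : (u : W) = 0 := by
        apply hq
        intro w
        obtain ⟨c, u', hu', rfl⟩ := hdec w
        rw [polar_add_right, polar_smul_right, huv, smul_zero, zero_add]
        exact hpU ⟨u', hu'⟩
      exact Subtype.ext this
    -- σ' preserves U
    have hσ'U : ∀ u ∈ U, σ' u ∈ U := by
      intro u hu
      rw [hmemU] at hu ⊢
      calc polar (⇑q) v (σ' u) = polar (⇑q) (σ' v) (σ' u) := by rw [hfix]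
        _ = polar (⇑q) v u := polar_isometry q hσ' v u
        _ = 0 := hu
    let σ'' : U →ₗ[F] U := σ'.restrict hσ'U
    have hσ''iso : ∀ u : U, (q.comp U.subtype) (σ'' u) = (q.comp U.subtype) u := by
      intro u
      simp only [QuadraticMap.comp_apply]
      exact hσ' (u : W)
    obtain ⟨l'', hl''ne, hl''⟩ := IH (n - 1) (by omega) (q.comp U.subtype) hqU σ'' hσ''iso hrankU
    refine ⟨l''.map (fun r : U => (r : W)), ?_, ?_⟩
    · intro r hr
      obtain ⟨r'', hr'', rfl⟩ := List.mem_map.mp hr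
      exact hl''ne r'' hr''
    · apply LinearMap.ext
      intro w
      obtain ⟨c, u, hu, rfl⟩ := hdec w
      have hfixprod : ∀ r ∈ l''.map (fun r : U => (r : W)), polar (⇑q) r v = 0 := by
        intro r hr
        obtain ⟨r'', hr'', rfl⟩ := List.mem_map.mp hr
        rw [polar_comm]
        exact (hmemU _).mp r''.2
      have hmm : (l''.map (fun r : U => (r : W))).map (qrefl q) =
          l''.map (fun r : U => qrefl q (r : W)) := by rw [List.map_map]; rfl
      rw [map_add, map_add, LinearMap.map_smul, LinearMap.map_smul, hfix, hmm]
      have h1 : (l''.map fun r : U => qrefl q (r : W)).prod v = v := by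
        rw [← hmm]; exact prod_qrefl_fix q _ v hfixprod
      rw [h1]
      congr 1
      have h2' : σ' u = ((σ'' ⟨u, hu⟩ : U) : W) := rfl
      rw [h2', hl'']
      exact prod_qrefl_coe q U l'' ⟨u, hu⟩
  -- find an anisotropic vector
  have hexv : ∃ v : W, q v ≠ 0 := by
    by_contra hno
    push_neg at hno
    have hall : ∀ v : W, v = 0 := by
      intro v
      apply hq
      intro w
      simp [QuadraticMap.polar, hno]
    have : Subsingleton W := ⟨fun a b => (hall a).trans (hall b).symm⟩
    rw [Module.finrank_zero_iff.mpr this] at hrank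
    omega
  obtain ⟨v, hv⟩ := hexv
  by_cases hfix : σ v = v
  · exact key σ hσ v hv hfix
  by_cases hd : q (v - σ v) ≠ 0
  · -- one extra reflection
    set w := v - σ v with hw
    have hqσv : q (σ v) = q v := hσ v
    have hpw : polar (⇑q) w (σ v) = -(q w) := by
      rw [hw, polar_sub_left, polar_self_eq_two_mul, q_sub_eq, hqσv]
      ring
    have hrefl : qrefl q w (σ v) = v := by
      rw [qrefl_apply, hpw]
      rw [show (q w)⁻¹ * -(q w) = -1 by field_simp]
      rw [hw]
      module
    have hσ'iso : ∀ x, q ((qrefl q w * σ) x) = q x := by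
      intro x
      simp only [Module.End.mul_apply]
      rw [map_qrefl q hd, hσ]
    obtain ⟨l', hl'ne, hl'⟩ := key (qrefl q w * σ) hσ'iso v hv
      (by simp only [Module.End.mul_apply]; exact hrefl)
    refine ⟨w :: l', ?_, ?_⟩
    · intro r hr
      rw [List.mem_cons] at hr
      rcases hr with rfl | hr
      · exact hd
      · exact hl'ne r hr
    · have hcancel : qrefl q w * (qrefl q w * σ) = σ := by
        apply LinearMap.ext
        intro y
        simp only [Module.End.mul_apply]
        exact qrefl_invol q hd _
      calc σ = qrefl q w * (qrefl q w * σ) := hcancel.symm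
        _ = ((w :: l').map (qrefl q)).prod := by
            rw [hl', List.map_cons, List.prod_cons]
  · -- two extra reflections
    push_neg at hd
    have hqσv : q (σ v) = q v := hσ v
    have hp : polar (⇑q) v (σ v) = 2 * q v := by
      have := q_sub_eq q v (σ v)
      rw [hd, hqσv] at this
      linear_combination this
    set w := v + σ v with hw
    have hqw : q w = 2 * (2 * q v) := by
      have hadd := QuadraticMap.map_add (⇑q) v (σ v)
      rw [hw, hadd, hqσv, hp]
      ring
    have hqw0 : q w ≠ 0 := by
      rw [hqw]
      exact mul_ne_zero h2 (mul_ne_zero h2 hv)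
    have hpw : polar (⇑q) w (σ v) = q w := by
      rw [hw, polar_add_left, polar_self_eq_two_mul, hqσv, hqw, hp]
      ring
    have hrefl1 : qrefl q w (σ v) = -v := by
      rw [qrefl_apply, hpw]
      rw [show (q w)⁻¹ * q w = 1 by field_simp]
      rw [hw]
      module
    have hrefl2 : qrefl q v (-v) = v := by
      rw [LinearMap.map_neg, qrefl_self q hv, neg_neg]
    have hσ'iso : ∀ x, q ((qrefl q v * (qrefl q w * σ)) x) = q x := by
      intro x
      simp only [Module.End.mul_apply]
      rw [map_qrefl q hv, map_qrefl q hqw0, hσ]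
    obtain ⟨l', hl'ne, hl'⟩ := key (qrefl q v * (qrefl q w * σ)) hσ'iso v hv
      (by simp only [Module.End.mul_apply]; rw [hrefl1]; exact hrefl2)
    refine ⟨w :: v :: l', ?_, ?_⟩
    · intro r hr
      rw [List.mem_cons, List.mem_cons] at hr
      rcases hr with rfl | rfl | hr
      · exact hqw0
      · exact hv
      · exact hl'ne r hr
    · have hcancel : qrefl q w * (qrefl q v * (qrefl q v * (qrefl q w * σ))) = σ := by
        apply LinearMap.ext
        intro y
        simp only [Module.End.mul_apply]
        rw [qrefl_invol q hv, qrefl_invol q hqw0]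
      calc σ = qrefl q w * (qrefl q v * (qrefl q v * (qrefl q w * σ))) := hcancel.symm
        _ = ((w :: v :: l').map (qrefl q)).prod := by
            rw [hl', List.map_cons, List.map_cons, List.prod_cons, List.prod_cons]
end CD

section Cliff
variable {F : Type*} [Field F] {V : Type*} [AddCommGroup V] [Module F V]
variable (Q : QuadraticForm F V)

open CliffordAlgebra

theorem iota_isUnit {r : V} (hr : Q r ≠ 0) : IsUnit (ι Q r) := by
  rw [isUnit_iff_exists]
  have h1 : (ι Q r) * ((Q r)⁻¹ • ι Q r) = 1 := by
    rw [Algebra.mul_smul_comm, ι_sq_scalar, Algebra.smul_def, ← map_mul,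
      inv_mul_cancel₀ hr, map_one]
  have h2 : ((Q r)⁻¹ • ι Q r) * (ι Q r) = 1 := by
    rw [Algebra.smul_mul_assoc, ι_sq_scalar, Algebra.smul_def, ← map_mul,
      inv_mul_cancel₀ hr, map_one]
  exact ⟨(Q r)⁻¹ • ι Q r, h1, h2⟩

theorem iota_conj {r : V} (hr : Q r ≠ 0) (x : V) :
    ι Q r * ι Q x = ι Q (-(qrefl Q r x)) * ι Q r := by
  have hswap := CliffordAlgebra.ι_mul_ι_add_swap (Q := Q) r x
  rw [qrefl_apply, neg_sub, LinearMap.map_sub, LinearMap.map_smul, sub_mul,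
    Algebra.smul_mul_assoc, ι_sq_scalar]
  rw [show ((Q r)⁻¹ * polar (⇑Q) r x) • (algebraMap F (CliffordAlgebra Q)) (Q r) =
    algebraMap F (CliffordAlgebra Q) (polar (⇑Q) r x) by
      rw [Algebra.smul_def, ← map_mul]; congr 1; field_simp]
  rw [← hswap, add_sub_cancel_right]

theorem g_conj (l : List V) (hl : ∀ r ∈ l, Q r ≠ 0) (x : V) :
    (l.map (ι Q)).prod * ι Q x =
      ι Q ((l.map fun r => -(qrefl Q r)).prod x) * (l.map (ι Q)).prod := by
  induction l with
  | nil => simp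
  | cons a t ih =>
    simp only [List.map_cons, List.prod_cons, Module.End.mul_apply]
    rw [mul_assoc, ih (fun r hr => hl r (List.mem_cons_of_mem _ hr)), ← mul_assoc,
      iota_conj Q (hl a (List.mem_cons_self)), mul_assoc]
    rfl

theorem negprod_eq (l : List V) :
    (l.map fun r => -(qrefl Q r)).prod = ((-1 : F) ^ l.length) • (l.map (qrefl Q)).prod := by
  induction l with
  | nil => simp
  | cons a t ih =>
    simp only [List.map_cons, List.prod_cons, List.length_cons, ih]
    rw [pow_succ]
    rw [show (-(qrefl Q a)) = (-1 : F) • qrefl Q a by simp]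
    rw [smul_mul_assoc, mul_smul_comm, smul_smul]
    ring_nf

theorem prod_iota_isUnit (l : List V) (hl : ∀ r ∈ l, Q r ≠ 0) :
    IsUnit (l.map (ι Q)).prod := by
  induction l with
  | nil => simp
  | cons a t ih =>
    simp only [List.map_cons, List.prod_cons]
    exact (iota_isUnit Q (hl a (List.mem_cons_self))).mul
      (ih fun r hr => hl r (List.mem_cons_of_mem _ hr))

end Cliff


/-- Suppose `V' ⊆ V` is a `φ`-invariant nondegenerate finite-dimensional subspace
of even dimension with `V'^⊥ ⊆ V(1)` and `det (φ|_{V/V(1)}) = 1`.  Then the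
Bogolyubov automorphism `[φ]` fixes every element of the centralizer of the
subalgebra of `Cl(V, Q)` generated by `ι(V')`. -/
theorem bogolyubov_fixes_centralizer
    {F V : Type*} [Field F] [AddCommGroup V] [Module F V]
    (hchar : (2 : F) ≠ 0)
    (Q : QuadraticForm F V)
    (hQ : ∀ v : V, (∀ w : V, QuadraticMap.polar Q v w = 0) → v = 0)
    (φ : V →ₗ[F] V) (hφbij : Function.Bijective φ)
    (hφQ : ∀ v : V, Q (φ v) = Q v)
    (θ : CliffordAlgebra Q ≃ₐ[F] CliffordAlgebra Q)
    (hθ : ∀ v : V, θ (CliffordAlgebra.ι Q v) = CliffordAlgebra.ι Q (φ v))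
    (V' : Submodule F V) (hV'fd : FiniteDimensional F V')
    (hV'even : Even (Module.finrank F V'))
    (hV'inv : ∀ u ∈ V', φ u ∈ V')
    (hV'nd : ∀ u ∈ V', (∀ w ∈ V', QuadraticMap.polar Q u w = 0) → u = 0)
    (hperp : ∀ w : V, (∀ u ∈ V', QuadraticMap.polar Q w u = 0) → w ∈ eigSp φ 1)
    (hfin : FiniteDimensional F (V ⧸ eigSp φ 1))
    (hdet : LinearMap.det (quotMap φ 1) = 1) :
    ∀ z ∈ Subalgebra.centralizer F
        ((Algebra.adjoin F (CliffordAlgebra.ι Q '' (V' : Set V))) :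
          Set (CliffordAlgebra Q)),
      θ z = z := by
  classical
  haveI := hV'fd
  intro z hz
  let ψ : ↥V' →ₗ[F] ↥V' := φ.restrict hV'inv
  have hψcoe : ∀ u : ↥V', ((ψ u : ↥V') : V) = φ (u : V) := fun u => rfl
  have hpolar' : ∀ a b : ↥V',
      polar (⇑(Q.comp V'.subtype)) a b = polar (⇑Q) (a : V) (b : V) := by
    intro a b; simp [QuadraticMap.polar, QuadraticMap.comp_apply]
  have hmem1 : ∀ w : V, w ∈ eigSp φ 1 ↔ φ w = w := by
    intro w
    simp [eigSp, LinearMap.mem_ker, sub_eq_zero]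
  have hmemψ : ∀ x : ↥V', x ∈ eigSp ψ 1 ↔ ψ x = x := by
    intro x
    simp [eigSp, LinearMap.mem_ker, sub_eq_zero]
  have hfixperp : ∀ w : V, (∀ u ∈ V', polar (⇑Q) w u = 0) → φ w = w := by
    intro w hw
    exact (hmem1 w).mp (hperp w hw)
  -- orthogonal decomposition with respect to V'
  have hdec : ∀ v : V, ∃ u, u ∈ V' ∧ ∀ u' ∈ V', polar (⇑Q) (v - u) u' = 0 := by
    intro v
    let L : ↥V' →ₗ[F] Module.Dual F ↥V' := QuadraticMap.polarBilin (Q.comp V'.subtype)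
    have hLinj : Function.Injective L := by
      rw [← LinearMap.ker_eq_bot, Submodule.eq_bot_iff]
      intro u hu
      have hLu : ∀ u' : ↥V', polar (⇑(Q.comp V'.subtype)) u u' = 0 := by
        intro u'
        have h0 : L u = 0 := hu
        calc polar (⇑(Q.comp V'.subtype)) u u' = (L u) u' := rfl
          _ = 0 := by rw [h0]; rfl
      have hu0 : (u : V) = 0 := by
        apply hV'nd (u : V) u.2
        intro w hw
        rw [← hpolar' u ⟨w, hw⟩]
        exact hLu _
      exact Subtype.ext hu0
    have hLsurj : Function.Surjective L :=
      (LinearMap.injective_iff_surjective_of_finrank_eq_finrank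
        (Subspace.dual_finrank_eq).symm).mp hLinj
    obtain ⟨u, hu⟩ := hLsurj (((QuadraticMap.polarBilin Q) v).comp V'.subtype)
    refine ⟨(u : V), u.2, ?_⟩
    intro u' hu'
    have hval := LinearMap.congr_fun hu ⟨u', hu'⟩
    simp only [L, QuadraticMap.polarBilin_apply_apply, LinearMap.comp_apply,
      Submodule.coe_subtype] at hval
    rw [polar_sub_left, ← hpolar' u ⟨u', hu'⟩, hval, sub_self]
  -- determinant of ψ equals 1
  have hinv1 : ∀ x ∈ eigSp ψ 1, ψ x ∈ eigSp ψ 1 := by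
    intro x hx
    rw [hmemψ] at hx ⊢
    rw [hx]
    exact hx
  have hinv1' : eigSp ψ 1 ≤ (eigSp ψ 1).comap ψ := fun x hx => hinv1 x hx
  have hrestr_id : LinearMap.det (ψ.restrict hinv1) = 1 := by
    have hid : ψ.restrict hinv1 = LinearMap.id := by
      apply LinearMap.ext
      intro x
      apply Subtype.ext
      show ψ (x : ↥V') = ((x : ↥(eigSp ψ 1)) : ↥V')
      exact (hmemψ _).mp x.2
    rw [hid, LinearMap.det_id]
  let f1 : ↥V' →ₗ[F] (V ⧸ eigSp φ 1) := (eigSp φ 1).mkQ ∘ₗ V'.subtype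
  have hker1 : eigSp ψ 1 ≤ LinearMap.ker f1 := by
    intro x hx
    rw [LinearMap.mem_ker]
    show (eigSp φ 1).mkQ ((x : ↥V') : V) = 0
    rw [Submodule.mkQ_apply, Submodule.Quotient.mk_eq_zero, hmem1]
    have hfx := (hmemψ x).mp hx
    calc φ ((x : ↥V') : V) = ((ψ x : ↥V') : V) := rfl
      _ = ((x : ↥V') : V) := by rw [hfx]
  let g1 : (↥V' ⧸ eigSp ψ 1) →ₗ[F] (V ⧸ eigSp φ 1) := (eigSp ψ 1).liftQ f1 hker1
  have hg1inj : Function.Injective g1 := by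
    rw [← LinearMap.ker_eq_bot, Submodule.ker_liftQ_eq_bot]
    intro x hx
    rw [LinearMap.mem_ker] at hx
    have hx' : ((x : ↥V') : V) ∈ eigSp φ 1 := by
      rw [← Submodule.Quotient.mk_eq_zero]
      exact hx
    rw [hmemψ]
    apply Subtype.ext
    show ((ψ x : ↥V') : V) = ((x : ↥V') : V)
    rw [hψcoe]
    exact (hmem1 _).mp hx'
  have hg1surj : Function.Surjective g1 := by
    intro zq
    obtain ⟨v, rfl⟩ := Submodule.mkQ_surjective _ zq
    obtain ⟨u, huV, hperpu⟩ := hdec v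
    refine ⟨Submodule.Quotient.mk ⟨u, huV⟩, ?_⟩
    have hg1mk : g1 (Submodule.Quotient.mk ⟨u, huV⟩) = Submodule.Quotient.mk u := rfl
    rw [hg1mk, Submodule.mkQ_apply]
    rw [Submodule.Quotient.eq]
    have hm := hperp (v - u) hperpu
    rw [show u - v = -(v - u) by abel]
    exact Submodule.neg_mem _ hm
  let e1 : (↥V' ⧸ eigSp ψ 1) ≃ₗ[F] (V ⧸ eigSp φ 1) :=
    LinearEquiv.ofBijective g1 ⟨hg1inj, hg1surj⟩
  have hquotφ : ∀ v : V, quotMap φ 1 (Submodule.Quotient.mk v) = Submodule.Quotient.mk (φ v) :=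
    fun v => rfl
  have hquotψ : ∀ x : ↥V', quotMap ψ 1 (Submodule.Quotient.mk x) = Submodule.Quotient.mk (ψ x) :=
    fun x => rfl
  have hconj : quotMap φ 1 = e1.toLinearMap ∘ₗ (quotMap ψ 1) ∘ₗ e1.symm.toLinearMap := by
    apply LinearMap.ext
    intro zq
    obtain ⟨x, rfl⟩ := e1.surjective zq
    obtain ⟨s, rfl⟩ := Submodule.Quotient.mk_surjective _ x
    simp only [LinearMap.coe_comp, Function.comp_apply, LinearEquiv.coe_coe]
    rw [e1.symm_apply_apply]
    have he1mk : ∀ t : ↥V', e1 (Submodule.Quotient.mk t) = Submodule.Quotient.mk (t : V) :=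
      fun t => rfl
    rw [he1mk, hquotφ, hquotψ, he1mk]
    rfl
  have hdetψq : LinearMap.det (quotMap ψ 1) = 1 := by
    have hc := LinearMap.det_conj (quotMap ψ 1) e1
    rw [← hconj] at hc
    rw [← hc]
    exact hdet
  have hdetψ : LinearMap.det ψ = 1 := by
    rw [det_restrict_mul_det_mapQ ψ (eigSp ψ 1) hinv1 hinv1', hrestr_id, one_mul]
    have heq : (eigSp ψ 1).mapQ (eigSp ψ 1) ψ hinv1' = quotMap ψ 1 := rfl
    rw [heq, hdetψq]
  -- nondegeneracy and isometry for the restricted form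
  have hq'nd : ∀ u : ↥V', (∀ u' : ↥V', polar (⇑(Q.comp V'.subtype)) u u' = 0) → u = 0 := by
    intro u hu
    have : (u : V) = 0 := by
      apply hV'nd (u : V) u.2
      intro w hw
      rw [← hpolar' u ⟨w, hw⟩]
      exact hu _
    exact Subtype.ext this
  have hψiso : ∀ u : ↥V', (Q.comp V'.subtype) (ψ u) = (Q.comp V'.subtype) u := by
    intro u
    show Q ((ψ u : ↥V') : V) = Q ((u : ↥V') : V)
    rw [hψcoe]
    exact hφQ _
  obtain ⟨l, hlne, hlψ⟩ := cartan_dieudonne hchar (Module.finrank F ↥V')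
    (Q.comp V'.subtype) hq'nd ψ hψiso rfl
  -- parity of the number of reflections
  have haux : ∀ t : List ↥V', (∀ r ∈ t, (Q.comp V'.subtype) r ≠ 0) →
      LinearMap.det ((t.map (qrefl (Q.comp V'.subtype))).prod) = (-1 : F) ^ t.length := by
    intro t
    induction t with
    | nil => intro _; simp
    | cons a s ih =>
      intro h
      simp only [List.map_cons, List.prod_cons, List.length_cons]
      rw [show (qrefl (Q.comp V'.subtype) a) * ((s.map (qrefl (Q.comp V'.subtype))).prod) =
        (qrefl (Q.comp V'.subtype) a) ∘ₗ ((s.map (qrefl (Q.comp V'.subtype))).prod) from rfl]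
      rw [LinearMap.det_comp, det_qrefl hchar _ (h a (List.mem_cons_self)),
        ih (fun r hr => h r (List.mem_cons_of_mem _ hr)), pow_succ]
      ring
  have hpow : (-1 : F) ^ l.length = 1 := by
    rw [← haux l hlne, ← hlψ, hdetψ]
  have hlen_even : Even l.length := by
    rcases Nat.even_or_odd l.length with he | ho
    · exact he
    · exfalso
      rw [Odd.neg_one_pow ho] at hpow
      apply hchar
      linear_combination -hpow
  -- the coerced list of reflection vectors
  let lc : List V := l.map (fun r : ↥V' => (r : V))
  have hlcne : ∀ r ∈ lc, Q r ≠ 0 := by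
    intro r hr
    obtain ⟨r', hr', rfl⟩ := List.mem_map.mp hr
    exact hlne r' hr'
  have hlclen : lc.length = l.length := List.length_map _
  -- the product of the corresponding reflections of V is φ
  have hprodφ : (lc.map (qrefl Q)).prod = φ := by
    apply LinearMap.ext
    intro v
    obtain ⟨u, huV, hperpu⟩ := hdec v
    have h1 : (lc.map (qrefl Q)).prod (v - u) = v - u := by
      apply prod_qrefl_fix
      intro r hr
      obtain ⟨r', hr', rfl⟩ := List.mem_map.mp hr
      rw [polar_comm]
      exact hperpu _ r'.2
    have h2 : φ (v - u) = v - u := hfixperp _ hperpu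
    have hcoe := prod_qrefl_coe Q V' l ⟨u, huV⟩
    have hψu : ((ψ ⟨u, huV⟩ : ↥V') : V) = (l.map fun r : ↥V' => qrefl Q (r : V)).prod u := by
      rw [hlψ]
      exact hcoe
    have h3 : (lc.map (qrefl Q)).prod u = φ u := by
      have hmm : lc.map (qrefl Q) = l.map (fun r : ↥V' => qrefl Q (r : V)) := by
        rw [List.map_map]
        rfl
      calc (lc.map (qrefl Q)).prod u = ((ψ ⟨u, huV⟩ : ↥V') : V) := by
            rw [hmm]; exact hψu.symm
        _ = φ u := hψcoe _
    calc (lc.map (qrefl Q)).prod v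
        = (lc.map (qrefl Q)).prod u + (lc.map (qrefl Q)).prod (v - u) := by
          rw [← map_add]; congr 1; abel
      _ = φ u + φ (v - u) := by rw [h1, h2, h3]
      _ = φ v := by rw [← map_add]; congr 1; abel
  -- the Clifford algebra element implementing φ
  set g : CliffordAlgebra Q := (lc.map (CliffordAlgebra.ι Q)).prod with hgdef
  have hcomm : ∀ v : V, g * CliffordAlgebra.ι Q v = CliffordAlgebra.ι Q (φ v) * g := by
    intro v
    rw [hgdef, g_conj Q lc hlcne v, negprod_eq, hlclen, Even.neg_one_pow hlen_even, one_smul,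
      hprodφ]
  have hθg : ∀ x : CliffordAlgebra Q, θ x * g = g * x := by
    intro x
    induction x using CliffordAlgebra.induction with
    | algebraMap r => rw [AlgEquiv.commutes]; exact Algebra.commutes r g
    | ι v => rw [hθ]; exact (hcomm v).symm
    | mul a b ha hb => rw [map_mul, mul_assoc, hb, ← mul_assoc, ha, mul_assoc]
    | add a b ha hb => rw [map_add, add_mul, ha, hb, mul_add]
  have hgunit : IsUnit g := prod_iota_isUnit Q lc hlcne
  have hgmem : g ∈ Algebra.adjoin F (CliffordAlgebra.ι Q '' (V' : Set V)) := by
    rw [hgdef]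
    apply Subalgebra.list_prod_mem
    intro x hx
    obtain ⟨y, hy, rfl⟩ := List.mem_map.mp hx
    obtain ⟨r', hr', rfl⟩ := List.mem_map.mp hy
    exact Algebra.subset_adjoin ⟨(r' : V), r'.2, rfl⟩
  have hzg : g * z = z * g := hz g hgmem
  have hfinal : θ z * g = z * g := by
    rw [hθg z, hzg]
  exact hgunit.mul_right_cancel hfinal
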